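/- Let n ≥ 1. For all Λ ≥ 0, c ≥ 0 and ε > 0 there exists r₀ > 0, depending only on Λ, c and ε, with the following property: for every S ∈ (0, r₀] and every twice differentiable y : [0, S] → ℝⁿ (with the Euclidean inner product) satisfying ‖y''(s)‖ ≤ Λ ‖y(s)‖ for all s, ‖y(0)‖ = 1, and ‖y'(0)‖ ≤ c, one has |‖y(s)‖ - 1| < ε for all s ∈ [0, S]; moreover, for every unit vector e ∈ ℝⁿ with ⟪y(0), e⟫ = 0, one has |⟪y(s), e⟫| < ε for all s ∈ [0, S]. -/

import Mathlib

open Set RealInnerProductSpace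

theorem stmt_11 (n : ℕ) (hn : 1 ≤ n) (Λ c ε : ℝ) (hΛ : 0 ≤ Λ) (hc : 0 ≤ c) (hε : 0 < ε) :
    ∃ r₀ > 0, ∀ S : ℝ, 0 < S → S ≤ r₀ →
      ∀ y y' y'' : ℝ → EuclideanSpace ℝ (Fin n),
        (∀ s ∈ Icc (0 : ℝ) S, HasDerivWithinAt y (y' s) (Icc (0 : ℝ) S) s) →
        (∀ s ∈ Icc (0 : ℝ) S, HasDerivWithinAt y' (y'' s) (Icc (0 : ℝ) S) s) →
        (∀ s ∈ Icc (0 : ℝ) S, ‖y'' s‖ ≤ Λ * ‖y s‖) →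
        ‖y 0‖ = 1 → ‖y' 0‖ ≤ c →
        (∀ s ∈ Icc (0 : ℝ) S, |‖y s‖ - 1| < ε) ∧
        (∀ e : EuclideanSpace ℝ (Fin n), ‖e‖ = 1 → ⟪y 0, e⟫ = 0 →
          ∀ s ∈ Icc (0 : ℝ) S, |⟪y s, e⟫| < ε) := by
  set K : ℝ := max 1 Λ with hKdef
  have hK1 : (1 : ℝ) ≤ K := le_max_left _ _
  set M : ℝ := max 1 c * Real.exp K with hMdef
  have hM0 : 0 < M := mul_pos (lt_of_lt_of_le one_pos (le_max_left _ _)) (Real.exp_pos _)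
  refine ⟨min 1 (ε / (2 * (M + 1))), lt_min one_pos (by positivity), ?_⟩
  intro S hS hSr y y' y'' hy hy' hbound hy0 hy'0
  have hS1 : S ≤ 1 := hSr.trans (min_le_left _ _)
  have hSε : S ≤ ε / (2 * (M + 1)) := hSr.trans (min_le_right _ _)
  -- Grönwall on z = (y, y')
  have hz : ∀ s ∈ Icc (0:ℝ) S,
      HasDerivWithinAt (fun t => (y t, y' t)) (y' s, y'' s) (Icc (0:ℝ) S) s :=
    fun s hs => (hy s hs).prodMk (hy' s hs)
  have hcont : ContinuousOn (fun t => (y t, y' t)) (Icc (0:ℝ) S) :=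
    fun s hs => (hz s hs).continuousWithinAt
  have hz' : ∀ s ∈ Ico (0:ℝ) S,
      HasDerivWithinAt (fun t => (y t, y' t)) (y' s, y'' s) (Ici s) s := by
    intro s hs
    exact (hz s ⟨hs.1, hs.2.le⟩).mono_of_mem_nhdsWithin (Icc_mem_nhdsGE_of_mem hs)
  have ha : ‖(y 0, y' 0)‖ ≤ max 1 c := by
    rw [Prod.norm_def, hy0]
    exact max_le_max le_rfl hy'0
  have bnd : ∀ s ∈ Ico (0:ℝ) S, ‖(y' s, y'' s)‖ ≤ K * ‖(y s, y' s)‖ + 0 := by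
    intro s hs
    rw [Prod.norm_def, Prod.norm_def, add_zero]
    have h1 : ‖y' s‖ ≤ K * max ‖y s‖ ‖y' s‖ :=
      (le_max_right _ _).trans (le_mul_of_one_le_left (le_max_of_le_left (norm_nonneg _)) hK1)
    have h2 : ‖y'' s‖ ≤ K * max ‖y s‖ ‖y' s‖ := by
      refine (hbound s ⟨hs.1, hs.2.le⟩).trans ?_
      exact mul_le_mul (le_max_right _ _) (le_max_left _ _) (norm_nonneg _)
        (le_trans zero_le_one hK1)
    exact max_le h1 h2
  have grw := norm_le_gronwallBound_of_norm_deriv_right_le hcont hz' ha bnd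
  have hy'le : ∀ s ∈ Icc (0:ℝ) S, ‖y' s‖ ≤ M := by
    intro s hs
    have h1 : ‖y' s‖ ≤ ‖(y s, y' s)‖ := by
      rw [Prod.norm_def]; exact le_max_right _ _
    have h2 := grw s hs
    rw [sub_zero, gronwallBound_ε0] at h2
    have hs1 : s ≤ 1 := hs.2.trans hS1
    have : Real.exp (K * s) ≤ Real.exp K := by
      apply Real.exp_le_exp.2
      nlinarith [hs.1]
    have hmax1 : (0:ℝ) ≤ max 1 c := le_trans zero_le_one (le_max_left _ _)
    calc ‖y' s‖ ≤ max 1 c * Real.exp (K * s) := h1.trans h2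
      _ ≤ max 1 c * Real.exp K := by nlinarith
  -- MVT: ‖y s - y 0‖ ≤ M * s
  have key : ∀ s ∈ Icc (0:ℝ) S, ‖y s - y 0‖ < ε := by
    intro s hs
    have hmvt := Convex.norm_image_sub_le_of_norm_hasDerivWithin_le hy hy'le
      (convex_Icc 0 S) (Set.left_mem_Icc.2 hS.le) hs
    have hsnorm : ‖s - 0‖ = s := by
      rw [sub_zero, Real.norm_eq_abs, abs_of_nonneg hs.1]
    rw [hsnorm] at hmvt
    have hsε : s ≤ ε / (2 * (M + 1)) := hs.2.trans hSε
    have hεd : M * (ε / (2 * (M + 1))) < ε := by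
      rw [mul_div_assoc', div_lt_iff₀ (by positivity)]
      nlinarith
    calc ‖y s - y 0‖ ≤ M * s := hmvt
      _ ≤ M * (ε / (2 * (M + 1))) := by nlinarith
      _ < ε := hεd
  constructor
  · intro s hs
    have := key s hs
    calc |‖y s‖ - 1| = |‖y s‖ - ‖y 0‖| := by rw [hy0]
      _ ≤ ‖y s - y 0‖ := abs_norm_sub_norm_le _ _
      _ < ε := this
  · intro e he he0 s hs
    have h1 : ⟪y s, e⟫ = ⟪y s - y 0, e⟫ := by
      rw [inner_sub_left, he0, sub_zero]
    rw [h1]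
    calc |⟪y s - y 0, e⟫| ≤ ‖y s - y 0‖ * ‖e‖ := abs_real_inner_le_norm _ _
      _ = ‖y s - y 0‖ := by rw [he, mul_one]
      _ < ε := key s hs
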